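/- If a vector y in ℝ^n w-Lorenz-dominates a vector x in ℝ^n (with positive weights w), then there exists an index j such that y_j > x_j and, for every index i, y_i/w_i ≥ min{x_i/w_i, x_j/w_j}. -/

import Mathlib

open Finset

/-- Cumulative sum of the first `i` entries of `v` along the ordering `σ`. -/
noncomputable def cumSum (n : ℕ) (v : Fin n → ℝ) (σ : Equiv.Perm (Fin n)) (i : ℕ) : ℝ :=
  ∑ k ∈ Finset.range i, if h : k < n then v (σ ⟨k, h⟩) else 0

/-- `σ` sorts the ratios `x i / w i` non-decreasingly. -/
def Sorts (n : ℕ) (x w : Fin n → ℝ) (σ : Equiv.Perm (Fin n)) : Prop :=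
  ∀ i j : Fin n, i ≤ j → x (σ i) / w (σ i) ≤ x (σ j) / w (σ j)

open scoped Classical in
/-- The piecewise-linear `w`-Lorenz-curve of `x`, computed with a sorting permutation `σ`:
it vanishes at `0`, passes through the partial sums at the breakpoints given by the
cumulative weights, and is linear in between. -/
noncomputable def lorenz (n : ℕ) (x w : Fin n → ℝ) (σ : Equiv.Perm (Fin n)) (p : ℝ) : ℝ :=
  if p ≤ 0 then 0
  else
    (fun j => cumSum n x σ j +
      (p - cumSum n w σ j) * (if h : j < n then x (σ ⟨j, h⟩) / w (σ ⟨j, h⟩) else 0))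
    (((Finset.range n).filter (fun i => cumSum n w σ i < p)).card - 1)

/-- `y` `w`-Lorenz-dominates `x`: the Lorenz curve of `y` is pointwise `≥` that of `x`
on `[0, W]`, with strict inequality somewhere. -/
def LorenzDom (n : ℕ) (y x w : Fin n → ℝ) : Prop :=
  ∃ σy σx : Equiv.Perm (Fin n), Sorts n y w σy ∧ Sorts n x w σx ∧
    (∀ p ∈ Set.Icc (0:ℝ) (∑ i, w i), lorenz n x w σx p ≤ lorenz n y w σy p) ∧
    ∃ p ∈ Set.Icc (0:ℝ) (∑ i, w i), lorenz n x w σx p < lorenz n y w σy p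

/-- If `y` `w`-Lorenz-dominates `x`, then there is an index `j` with `y j > x j` and
`y i / w i ≥ min (x i / w i) (x j / w j)` for every `i`. -/

lemma dc_range (S : Finset ℕ) (h : ∀ i ∈ S, ∀ j, j ≤ i → j ∈ S) :
    S = Finset.range S.card := by
  rcases S.eq_empty_or_nonempty with rfl | hS
  · simp
  · have hmax := S.max'_mem hS
    have hsub : S = Finset.range (S.max' hS + 1) := by
      apply Finset.Subset.antisymm
      · intro i hi
        simp only [Finset.mem_range, Nat.lt_succ_iff]
        exact S.le_max' i hi
      · intro i hi
        simp only [Finset.mem_range, Nat.lt_succ_iff] at hi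
        exact h _ hmax i hi
    have hcard := congrArg Finset.card hsub
    rw [Finset.card_range] at hcard
    rw [hcard]; exact hsub

lemma cumSum_succ (n : ℕ) (v : Fin n → ℝ) (σ : Equiv.Perm (Fin n)) (k : ℕ) (hk : k < n) :
    cumSum n v σ (k + 1) = cumSum n v σ k + v (σ ⟨k, hk⟩) := by
  simp [cumSum, Finset.sum_range_succ, hk]

lemma sum_prefix (n : ℕ) (v : Fin n → ℝ) (σ : Equiv.Perm (Fin n)) :
    ∀ j, j ≤ n → ∑ i ∈ univ.filter (fun i : Fin n => (σ.symm i : ℕ) < j), v i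
      = cumSum n v σ j := by
  intro j
  induction j with
  | zero => intro _; simp [cumSum]
  | succ k ih =>
    intro hk
    have hkn : k < n := hk
    rw [cumSum_succ n v σ k hkn, ← ih (le_of_lt hkn)]
    have hins : univ.filter (fun i : Fin n => (σ.symm i : ℕ) < k + 1)
        = insert (σ ⟨k, hkn⟩) (univ.filter (fun i : Fin n => (σ.symm i : ℕ) < k)) := by
      ext i
      simp only [Finset.mem_filter, Finset.mem_univ, true_and, Finset.mem_insert,
        Nat.lt_succ_iff_lt_or_eq]
      constructor
      · rintro (h | h)
        · exact Or.inr h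
        · left
          have : σ.symm i = ⟨k, hkn⟩ := Fin.ext h
          rw [← this, Equiv.apply_symm_apply]
      · rintro (rfl | h)
        · right; simp
        · exact Or.inl h
    rw [hins, Finset.sum_insert (by simp)]
    ring

lemma cumSum_ico (n : ℕ) (v : Fin n → ℝ) (σ : Equiv.Perm (Fin n)) {k l : ℕ} (hkl : k ≤ l) :
    cumSum n v σ l = cumSum n v σ k
      + ∑ t ∈ Finset.Ico k l, (if h : t < n then v (σ ⟨t, h⟩) else 0) := by
  rw [cumSum, cumSum, Finset.range_eq_Ico, Finset.range_eq_Ico]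
  exact (Finset.sum_Ico_consecutive (fun t => if h : t < n then v (σ ⟨t, h⟩) else 0) (Nat.zero_le k) hkl).symm

lemma cumSum_w_le (n : ℕ) (w : Fin n → ℝ) (σ : Equiv.Perm (Fin n)) (hw : ∀ i, 0 < w i)
    {k l : ℕ} (hkl : k ≤ l) : cumSum n w σ k ≤ cumSum n w σ l := by
  rw [cumSum_ico n w σ hkl]
  have : (0:ℝ) ≤ ∑ t ∈ Finset.Ico k l, (if h : t < n then w (σ ⟨t, h⟩) else 0) := by
    apply Finset.sum_nonneg
    intro t _
    by_cases h : t < n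
    · simp [h, (hw _).le]
    · simp [h]
  linarith

lemma cumSum_w_nonneg (n : ℕ) (w : Fin n → ℝ) (σ : Equiv.Perm (Fin n)) (hw : ∀ i, 0 < w i)
    (k : ℕ) : 0 ≤ cumSum n w σ k := by
  have := cumSum_w_le n w σ hw (Nat.zero_le k)
  simpa [cumSum] using this

lemma cumSum_w_lt (n : ℕ) (w : Fin n → ℝ) (σ : Equiv.Perm (Fin n)) (hw : ∀ i, 0 < w i)
    {k l : ℕ} (hkl : k < l) (hl : l ≤ n) : cumSum n w σ k < cumSum n w σ l := by
  rw [cumSum_ico n w σ hkl.le]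
  have : (0:ℝ) < ∑ t ∈ Finset.Ico k l, (if h : t < n then w (σ ⟨t, h⟩) else 0) := by
    apply Finset.sum_pos
    · intro t ht
      have htn : t < n := lt_of_lt_of_le (Finset.mem_Ico.mp ht).2 hl
      rw [dif_pos htn]
      exact hw _
    · exact ⟨k, Finset.mem_Ico.mpr ⟨le_refl k, hkl⟩⟩
  linarith

lemma tail_lower (n : ℕ) (v w : Fin n → ℝ) (σ : Equiv.Perm (Fin n)) (hw : ∀ i, 0 < w i)
    (hs : Sorts n v w σ) {k l : ℕ} (hk : k < n) (hkl : k ≤ l) (hl : l ≤ n) :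
    cumSum n v σ k + (cumSum n w σ l - cumSum n w σ k) * (v (σ ⟨k, hk⟩) / w (σ ⟨k, hk⟩))
      ≤ cumSum n v σ l := by
  rw [cumSum_ico n v σ hkl, cumSum_ico n w σ hkl]
  set r := v (σ ⟨k, hk⟩) / w (σ ⟨k, hk⟩) with hr
  have key : ∀ t ∈ Finset.Ico k l,
      (if h : t < n then w (σ ⟨t, h⟩) else 0) * r ≤ (if h : t < n then v (σ ⟨t, h⟩) else 0) := by
    intro t ht
    obtain ⟨hkt, htl⟩ := Finset.mem_Ico.mp ht
    have htn : t < n := lt_of_lt_of_le htl hl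
    rw [dif_pos htn, dif_pos htn]
    have hρ : r ≤ v (σ ⟨t, htn⟩) / w (σ ⟨t, htn⟩) := hs ⟨k, hk⟩ ⟨t, htn⟩ hkt
    calc w (σ ⟨t, htn⟩) * r ≤ w (σ ⟨t, htn⟩) * (v (σ ⟨t, htn⟩) / w (σ ⟨t, htn⟩)) :=
          mul_le_mul_of_nonneg_left hρ (hw _).le
      _ = v (σ ⟨t, htn⟩) := mul_div_cancel₀ _ (hw _).ne'
  have := Finset.sum_le_sum key
  rw [← Finset.sum_mul] at this
  linarith

open scoped Classical in
lemma filter_eq_range (n : ℕ) (w : Fin n → ℝ) (σ : Equiv.Perm (Fin n)) (hw : ∀ i, 0 < w i)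
    (p : ℝ) :
    (Finset.range n).filter (fun i => cumSum n w σ i < p)
      = Finset.range (((Finset.range n).filter (fun i => cumSum n w σ i < p)).card) := by
  apply dc_range
  intro i hi j hji
  simp only [Finset.mem_filter, Finset.mem_range] at hi ⊢
  exact ⟨lt_of_le_of_lt hji hi.1, lt_of_le_of_lt (cumSum_w_le n w σ hw hji) hi.2⟩

open scoped Classical in
lemma lorenz_apply (n : ℕ) (v w : Fin n → ℝ) (σ : Equiv.Perm (Fin n)) (p : ℝ) (hp : 0 < p)
    (hjn : ((Finset.range n).filter (fun i => cumSum n w σ i < p)).card - 1 < n) :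
    lorenz n v w σ p =
      cumSum n v σ (((Finset.range n).filter (fun i => cumSum n w σ i < p)).card - 1)
      + (p - cumSum n w σ (((Finset.range n).filter (fun i => cumSum n w σ i < p)).card - 1))
        * (v (σ ⟨((Finset.range n).filter (fun i => cumSum n w σ i < p)).card - 1, hjn⟩)
          / w (σ ⟨((Finset.range n).filter (fun i => cumSum n w σ i < p)).card - 1, hjn⟩)) := by
  simp only [lorenz, if_neg (not_le.mpr hp)]
  rw [dif_pos hjn]

open scoped Classical in
lemma card_facts (n : ℕ) (w : Fin n → ℝ) (σ : Equiv.Perm (Fin n)) (hw : ∀ i, 0 < w i)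
    (p : ℝ) (hp : 0 < p) (hn : 0 < n) :
    (∀ i, i < ((Finset.range n).filter (fun i => cumSum n w σ i < p)).card ↔
        (i < n ∧ cumSum n w σ i < p)) ∧
      1 ≤ ((Finset.range n).filter (fun i => cumSum n w σ i < p)).card ∧
      ((Finset.range n).filter (fun i => cumSum n w σ i < p)).card ≤ n := by
  have hfr := filter_eq_range n w σ hw p
  have hmem : ∀ i, i < ((Finset.range n).filter (fun i => cumSum n w σ i < p)).card ↔
      (i < n ∧ cumSum n w σ i < p) := by
    intro i
    constructor
    · intro hi
      have : i ∈ (Finset.range n).filter (fun i => cumSum n w σ i < p) := by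
        rw [hfr]; exact Finset.mem_range.mpr hi
      simpa using this
    · intro hi
      have : i ∈ (Finset.range n).filter (fun i => cumSum n w σ i < p) := by
        simp [hi.1, hi.2]
      rw [hfr] at this; exact Finset.mem_range.mp this
  refine ⟨hmem, ?_, ?_⟩
  · have : (0:ℕ) < _ := (hmem 0).mpr ⟨hn, by simpa [cumSum] using hp⟩
    omega
  · exact le_trans (Finset.card_filter_le _ _) (le_of_eq (Finset.card_range n))

open scoped Classical in
lemma knap (n : ℕ) (v w : Fin n → ℝ) (σ : Equiv.Perm (Fin n)) (hw : ∀ i, 0 < w i)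
    (hs : Sorts n v w σ) (t : Fin n → ℝ) (ht0 : ∀ i, 0 ≤ t i) (ht1 : ∀ i, t i ≤ 1)
    (hp : 0 < ∑ i, t i * w i) :
    lorenz n v w σ (∑ i, t i * w i) ≤ ∑ i, t i * v i := by
  set p := ∑ i, t i * w i with hpdef
  have hn : 0 < n := by
    rcases Nat.eq_zero_or_pos n with rfl | hn
    · simp [hpdef] at hp
    · exact hn
  obtain ⟨hmem, hc1, hcn⟩ := card_facts n w σ hw p hp hn
  set c := ((Finset.range n).filter (fun i => cumSum n w σ i < p)).card with hc
  set j := c - 1 with hj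
  have hjn : j < n := by omega
  have hWj : cumSum n w σ j < p := ((hmem j).mp (by omega)).2
  set r := v (σ ⟨j, hjn⟩) / w (σ ⟨j, hjn⟩) with hr
  set P := univ.filter (fun i : Fin n => (σ.symm i : ℕ) < j) with hP
  have hPv : ∑ i ∈ P, v i = cumSum n v σ j := sum_prefix n v σ j hjn.le
  have hPw : ∑ i ∈ P, w i = cumSum n w σ j := sum_prefix n w σ j hjn.le
  have hlor : lorenz n v w σ p = cumSum n v σ j + (p - cumSum n w σ j) * r :=
    lorenz_apply n v w σ p hp hjn
  have key : ∀ i : Fin n,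
      (if i ∈ P then v i - w i * r else 0) + t i * (w i * r) ≤ t i * v i := by
    intro i
    have hwi := hw i
    have hveq : w i * (v i / w i) = v i := mul_div_cancel₀ _ hwi.ne'
    by_cases hiP : i ∈ P
    · rw [if_pos hiP]
      have hpos : (σ.symm i : ℕ) < j := by
        have := Finset.mem_filter.mp hiP; exact this.2
      have hρ : v i / w i ≤ r := by
        have := hs (σ.symm i) ⟨j, hjn⟩ (by exact le_of_lt hpos)
        simpa using this
      have hρ' : v i ≤ w i * r := by
        calc v i = w i * (v i / w i) := hveq.symm
          _ ≤ w i * r := mul_le_mul_of_nonneg_left hρ hwi.le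
      nlinarith [mul_nonneg (sub_nonneg.mpr (ht1 i)) (sub_nonneg.mpr hρ')]
    · rw [if_neg hiP]
      have hpos : j ≤ (σ.symm i : ℕ) := by
        by_contra hcon
        exact hiP (Finset.mem_filter.mpr ⟨Finset.mem_univ _, by omega⟩)
      have hρ : r ≤ v i / w i := by
        have := hs ⟨j, hjn⟩ (σ.symm i) hpos
        simpa using this
      have : t i * (w i * r) ≤ t i * (w i * (v i / w i)) :=
        mul_le_mul_of_nonneg_left (mul_le_mul_of_nonneg_left hρ hwi.le) (ht0 i)
      rw [hveq] at this
      linarith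
  have hsum := Finset.sum_le_sum (fun i (_ : i ∈ univ) => key i)
  have hsplit : ∑ i : Fin n, ((if i ∈ P then v i - w i * r else 0) + t i * (w i * r))
      = (∑ i ∈ P, v i) - (∑ i ∈ P, w i) * r + p * r := by
    rw [Finset.sum_add_distrib]
    congr 1
    · rw [Finset.sum_ite_mem, Finset.univ_inter, Finset.sum_sub_distrib, Finset.sum_mul]
    · rw [hpdef, Finset.sum_mul]
      exact Finset.sum_congr rfl (fun i _ => by ring)
  rw [hsplit, hPv, hPw] at hsum
  rw [hlor]
  linarith

open scoped Classical in
lemma lorenz_lower (n : ℕ) (v w : Fin n → ℝ) (σ : Equiv.Perm (Fin n)) (hw : ∀ i, 0 < w i)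
    (hs : Sorts n v w σ) (k : ℕ) (hk : k < n) (p : ℝ) (hp : 0 < p)
    (hkp : cumSum n w σ k ≤ p) :
    cumSum n v σ k + (p - cumSum n w σ k) * (v (σ ⟨k, hk⟩) / w (σ ⟨k, hk⟩))
      ≤ lorenz n v w σ p := by
  have hn : 0 < n := by omega
  obtain ⟨hmem, hc1, hcn⟩ := card_facts n w σ hw p hp hn
  set c := ((Finset.range n).filter (fun i => cumSum n w σ i < p)).card with hc
  have hkc : k ≤ c := by
    by_contra hcon
    push_neg at hcon
    have : c < c := (hmem c).mpr ⟨by omega,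
      lt_of_lt_of_le (cumSum_w_lt n w σ hw hcon hk.le) hkp⟩
    omega
  set j := c - 1 with hj
  have hjn : j < n := by omega
  have hWj : cumSum n w σ j < p := ((hmem j).mp (by omega)).2
  have hlor : lorenz n v w σ p = cumSum n v σ j + (p - cumSum n w σ j)
      * (v (σ ⟨j, hjn⟩) / w (σ ⟨j, hjn⟩)) := lorenz_apply n v w σ p hp hjn
  rw [hlor]
  rcases Nat.lt_or_ge j k with hjk | hkj
  · have hnk : ¬ cumSum n w σ k < p := by
      intro hlt
      have : k < c := (hmem k).mpr ⟨hk, hlt⟩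
      omega
    have hpk : p = cumSum n w σ k := le_antisymm (not_lt.mp hnk) hkp
    have hkj1 : k = j + 1 := by omega
    have hVk : cumSum n v σ k = cumSum n v σ j + v (σ ⟨j, hjn⟩) := by
      rw [hkj1]; exact cumSum_succ n v σ j hjn
    have hWk : cumSum n w σ k = cumSum n w σ j + w (σ ⟨j, hjn⟩) := by
      rw [hkj1]; exact cumSum_succ n w σ j hjn
    have hcan : w (σ ⟨j, hjn⟩) * (v (σ ⟨j, hjn⟩) / w (σ ⟨j, hjn⟩)) = v (σ ⟨j, hjn⟩) :=
      mul_div_cancel₀ _ (hw _).ne'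
    have hz : (p - cumSum n w σ k) * (v (σ ⟨k, hk⟩) / w (σ ⟨k, hk⟩)) = 0 := by
      rw [hpk]; ring
    have hz2 : (p - cumSum n w σ j) * (v (σ ⟨j, hjn⟩) / w (σ ⟨j, hjn⟩))
        = w (σ ⟨j, hjn⟩) * (v (σ ⟨j, hjn⟩) / w (σ ⟨j, hjn⟩)) := by
      rw [hpk, hWk]; ring
    linarith [hVk, hz, hz2, hcan]
  · have hrkj : v (σ ⟨k, hk⟩) / w (σ ⟨k, hk⟩) ≤ v (σ ⟨j, hjn⟩) / w (σ ⟨j, hjn⟩) :=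
      hs ⟨k, hk⟩ ⟨j, hjn⟩ hkj
    have htail := tail_lower n v w σ hw hs hk hkj hjn.le
    have h1 : (p - cumSum n w σ j) * (v (σ ⟨k, hk⟩) / w (σ ⟨k, hk⟩))
        ≤ (p - cumSum n w σ j) * (v (σ ⟨j, hjn⟩) / w (σ ⟨j, hjn⟩)) :=
      mul_le_mul_of_nonneg_left hrkj (by linarith)
    have hid : (p - cumSum n w σ k) * (v (σ ⟨k, hk⟩) / w (σ ⟨k, hk⟩))
        = (cumSum n w σ j - cumSum n w σ k) * (v (σ ⟨k, hk⟩) / w (σ ⟨k, hk⟩))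
          + (p - cumSum n w σ j) * (v (σ ⟨k, hk⟩) / w (σ ⟨k, hk⟩)) := by ring
    linarith [htail, h1, hid]

open scoped Classical in
lemma cumSum_top (n : ℕ) (v : Fin n → ℝ) (σ : Equiv.Perm (Fin n)) :
    cumSum n v σ n = ∑ i, v i := by
  rw [← sum_prefix n v σ n le_rfl]
  have : univ.filter (fun i : Fin n => (σ.symm i : ℕ) < n) = univ := by
    apply Finset.filter_true_of_mem
    intro i _
    exact (σ.symm i).isLt
  rw [this]

open scoped Classical in
lemma dc_prefix (n : ℕ) (σ : Equiv.Perm (Fin n)) (T : Finset (Fin n))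
    (hdc : ∀ i ∈ T, ∀ b : Fin n, (b : ℕ) ≤ (σ.symm i : ℕ) → σ b ∈ T) :
    T = univ.filter (fun i : Fin n => (σ.symm i : ℕ) < T.card) := by
  set A := T.image (fun i => ((σ.symm i : Fin n) : ℕ)) with hA
  have hinj : Set.InjOn (fun i => ((σ.symm i : Fin n) : ℕ)) T := by
    intro a _ b _ hab
    have : σ.symm a = σ.symm b := Fin.ext hab
    exact σ.symm.injective this
  have hAcard : A.card = T.card := Finset.card_image_of_injOn hinj
  have hAdc : ∀ a ∈ A, ∀ b, b ≤ a → b ∈ A := by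
    intro a ha b hba
    obtain ⟨i, hiT, hia⟩ := Finset.mem_image.mp ha
    have hbn : b < n := lt_of_le_of_lt (hia ▸ hba) (σ.symm i).isLt
    have hmem : σ ⟨b, hbn⟩ ∈ T := hdc i hiT ⟨b, hbn⟩ (by rw [hia]; exact hba)
    refine Finset.mem_image.mpr ⟨σ ⟨b, hbn⟩, hmem, ?_⟩
    simp
  have hrange : A = Finset.range T.card := by
    rw [← hAcard]; exact dc_range A hAdc
  ext i
  simp only [Finset.mem_filter, Finset.mem_univ, true_and]
  constructor
  · intro hi
    have : ((σ.symm i : Fin n) : ℕ) ∈ A := Finset.mem_image_of_mem _ hi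
    rw [hrange] at this
    exact Finset.mem_range.mp this
  · intro hi
    have : ((σ.symm i : Fin n) : ℕ) ∈ A := by
      rw [hrange]; exact Finset.mem_range.mpr hi
    obtain ⟨i', hi'T, hi'⟩ := Finset.mem_image.mp this
    have : i' = i := σ.symm.injective (Fin.ext hi') |> fun h => by
      exact σ.symm.injective (Fin.ext hi')
    rwa [← this]

theorem lorenzDom_exists_gt_min (n : ℕ) (x y w : Fin n → ℝ) (hw : ∀ i, 0 < w i)
    (hdom : LorenzDom n y x w) :
    ∃ j : Fin n, x j < y j ∧ ∀ i : Fin n, min (x i / w i) (x j / w j) ≤ y i / w i := by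
  classical
  obtain ⟨σy, σx, hsy, hsx, hle, p0, hp0mem, hlt⟩ := hdom
  by_cases hB : ∃ i, y i / w i < x i / w i
  · -- Case B nonempty
    obtain ⟨i1, hi1⟩ := hB
    obtain ⟨i0, hi0B, hi0min⟩ := Finset.exists_min_image
      (univ.filter (fun i => y i / w i < x i / w i)) (fun i => y i / w i)
      ⟨i1, by simp [hi1]⟩
    set m := y i0 / w i0 with hm
    have hi0 : m < x i0 / w i0 := (Finset.mem_filter.mp hi0B).2
    have hclaim : ∃ j, x j < y j ∧ x j / w j ≤ m := by
      by_contra hno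
      push_neg at hno
      set T := univ.filter (fun j : Fin n => x j / w j ≤ m) with hT
      have hTy : ∀ j ∈ T, y j ≤ x j := by
        intro j hj
        by_contra hyx
        push_neg at hyx
        exact absurd ((Finset.mem_filter.mp hj).2) (not_le.mpr (hno j hyx))
      have hi0T : i0 ∉ T := by
        simp only [hT, Finset.mem_filter, Finset.mem_univ, true_and, not_le]
        exact hi0
      set k := T.card with hk
      have hdcT : T = univ.filter (fun i : Fin n => (σx.symm i : ℕ) < k) := by
        apply dc_prefix
        intro i hiT b hb
        have hxi : x i / w i ≤ m := (Finset.mem_filter.mp hiT).2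
        have hrat : x (σx b) / w (σx b) ≤ x i / w i := by
          have := hsx b (σx.symm i) hb
          simpa using this
        exact Finset.mem_filter.mpr ⟨Finset.mem_univ _, le_trans hrat hxi⟩
      have hkn : k < n := by
        have : T ≠ univ := fun h => hi0T (h ▸ Finset.mem_univ i0)
        have := Finset.card_lt_card (Finset.ssubset_univ_iff.mpr this)
        simpa using this
      have hTx : ∑ j ∈ T, x j = cumSum n x σx k := by
        rw [hdcT]; exact sum_prefix n x σx k hkn.le
      have hTw : ∑ j ∈ T, w j = cumSum n w σx k := by
        rw [hdcT]; exact sum_prefix n w σx k hkn.le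
      have hrk : m < x (σx ⟨k, hkn⟩) / w (σx ⟨k, hkn⟩) := by
        have hnotT : σx ⟨k, hkn⟩ ∉ T := by
          rw [hdcT]; simp
        rw [hT] at hnotT
        simp only [Finset.mem_filter, Finset.mem_univ, true_and, not_le] at hnotT
        exact hnotT
      set q := (∑ j ∈ T, w j) + w i0 with hq
      have hTw0 : 0 ≤ ∑ j ∈ T, w j := Finset.sum_nonneg (fun j _ => (hw j).le)
      have hq0 : 0 < q := by have := hw i0; linarith
      have hqins : q = ∑ j ∈ insert i0 T, w j := by
        rw [Finset.sum_insert hi0T]; ring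
      have hqW : q ≤ ∑ i, w i := by
        rw [hqins]
        exact Finset.sum_le_sum_of_subset_of_nonneg (Finset.subset_univ _)
          (fun i _ _ => (hw i).le)
      set tt : Fin n → ℝ := fun i => if i ∈ insert i0 T then (1:ℝ) else 0 with htt
      have httsum : ∀ g : Fin n → ℝ, ∑ i, tt i * g i = ∑ j ∈ insert i0 T, g j := by
        intro g
        rw [show ∑ i, tt i * g i = ∑ i, (if i ∈ insert i0 T then g i else 0) from
          Finset.sum_congr rfl (fun i _ => by simp only [htt]; split_ifs <;> ring)]
        rw [Finset.sum_ite_mem, Finset.univ_inter]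
      have httw : ∑ i, tt i * w i = q := by rw [httsum w, ← hqins]
      have hup : lorenz n y w σy q ≤ y i0 + ∑ j ∈ T, y j := by
        have hknap := knap n y w σy hw hsy tt
          (fun i => by simp only [htt]; split_ifs <;> norm_num)
          (fun i => by simp only [htt]; split_ifs <;> norm_num)
          (by rw [httw]; exact hq0)
        rw [httw, httsum y, Finset.sum_insert hi0T] at hknap
        exact hknap
      have hyi0 : y i0 = w i0 * m := by
        rw [hm, mul_div_cancel₀ _ (hw i0).ne']
      have hTyx : ∑ j ∈ T, y j ≤ ∑ j ∈ T, x j := Finset.sum_le_sum hTy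
      have hlow := lorenz_lower n x w σx hw hsx k hkn q hq0
        (by rw [← hTw]; have := hw i0; linarith)
      rw [hTx, hTw] at *
      have hdom' := hle q ⟨hq0.le, hqW⟩
      have hmul : w i0 * m < w i0 * (x (σx ⟨k, hkn⟩) / w (σx ⟨k, hkn⟩)) :=
        mul_lt_mul_of_pos_left hrk (hw i0)
      have hqsub : q - cumSum n w σx k = w i0 := by rw [hq]; ring
      rw [hqsub] at hlow
      linarith
    obtain ⟨j, hj1, hj2⟩ := hclaim
    refine ⟨j, hj1, fun i => ?_⟩
    by_cases hi : y i / w i < x i / w i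
    · have hmin := hi0min i (Finset.mem_filter.mpr ⟨Finset.mem_univ _, hi⟩)
      calc min (x i / w i) (x j / w j) ≤ x j / w j := min_le_right _ _
        _ ≤ m := hj2
        _ ≤ y i / w i := hmin
    · push_neg at hi
      exact le_trans (min_le_left _ _) hi
  · -- Case B empty
    push_neg at hB
    have hxy : ∀ i, x i ≤ y i := fun i => by
      have := hB i
      rwa [div_le_div_iff_of_pos_right (hw i)] at this
    by_cases hex : ∃ j, x j < y j
    · obtain ⟨j, hj⟩ := hex
      exact ⟨j, hj, fun i => le_trans (min_le_left _ _) (hB i)⟩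
    · exfalso
      push_neg at hex
      have hxyeq : y = x := funext fun i => le_antisymm (hex i) (hxy i)
      rw [hxyeq] at hlt hsy
      rcases eq_or_lt_of_le hp0mem.1 with h0 | h0
      · rw [← h0] at hlt
        simp only [lorenz, if_pos le_rfl] at hlt
        exact lt_irrefl _ hlt
      · -- p0 > 0 : fractional prefix of σx, feed to knap for σy
        have hn : 0 < n := by
          rcases Nat.eq_zero_or_pos n with rfl | hn
          · have : (∑ i : Fin 0, w i) = 0 := by simp
            rw [this] at hp0mem
            exact absurd hp0mem.2 (not_le.mpr h0)
          · exact hn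
        obtain ⟨hmem, hc1, hcn⟩ := card_facts n w σx hw p0 h0 hn
        set c := ((Finset.range n).filter (fun i => cumSum n w σx i < p0)).card with hc
        set j := c - 1 with hj
        have hjn : j < n := by omega
        have hWj : cumSum n w σx j < p0 := ((hmem j).mp (by omega)).2
        have hWj1 : p0 ≤ cumSum n w σx (j + 1) := by
          rcases Nat.lt_or_ge (j+1) n with hj1n | hj1n
          · by_contra hcon
            push_neg at hcon
            have : j + 1 < c := (hmem (j+1)).mpr ⟨hj1n, hcon⟩
            omega
          · have hj1 : j + 1 = n := by omega
            rw [hj1, cumSum_top]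
            exact hp0mem.2
        have hsucc := cumSum_succ n w σx j hjn
        set s := (p0 - cumSum n w σx j) / w (σx ⟨j, hjn⟩) with hs
        have hwj := hw (σx ⟨j, hjn⟩)
        have hs0 : 0 ≤ s := div_nonneg (by linarith) hwj.le
        have hs1 : s ≤ 1 := by
          rw [hs, div_le_one hwj]
          linarith [hWj1, hsucc]
        set tt : Fin n → ℝ := fun i =>
          if (σx.symm i : ℕ) < j then (1:ℝ) else if (σx.symm i : ℕ) = j then s else 0 with htt
        have httsum : ∀ g : Fin n → ℝ,
            ∑ i, tt i * g i = cumSum n g σx j + s * g (σx ⟨j, hjn⟩) := by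
          intro g
          rw [show ∑ i, tt i * g i = ∑ i, (if (σx.symm i : ℕ) < j then g i
              else if (σx.symm i : ℕ) = j then s * g i else 0) from
            Finset.sum_congr rfl (fun i _ => by simp only [htt]; split_ifs <;> ring)]
          rw [Finset.sum_ite, sum_prefix n g σx j hjn.le]
          congr 1
          rw [Finset.sum_eq_single_of_mem (σx ⟨j, hjn⟩)]
          · rw [if_pos]
            simp
          · simp
          · intro b hb hne
            rw [if_neg]
            intro hbj
            apply hne
            have : σx.symm b = ⟨j, hjn⟩ := Fin.ext hbj
            rw [← this, Equiv.apply_symm_apply]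
        have httw : ∑ i, tt i * w i = p0 := by
          rw [httsum w, hs, div_mul_cancel₀ _ hwj.ne']
          ring
        have htt0 : ∀ i, 0 ≤ tt i := fun i => by
          simp only [htt]; split_ifs <;> norm_num
          exact hs0
        have htt1 : ∀ i, tt i ≤ 1 := fun i => by
          simp only [htt]; split_ifs <;> norm_num
          exact hs1
        have hknap := knap n x w σy hw hsy tt htt0 htt1 (by rw [httw]; exact h0)
        rw [httw, httsum x] at hknap
        have hlorx : lorenz n x w σx p0 = cumSum n x σx j + (p0 - cumSum n w σx j)
            * (x (σx ⟨j, hjn⟩) / w (σx ⟨j, hjn⟩)) := lorenz_apply n x w σx p0 h0 hjn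
        have hsx' : s * x (σx ⟨j, hjn⟩) = (p0 - cumSum n w σx j)
            * (x (σx ⟨j, hjn⟩) / w (σx ⟨j, hjn⟩)) := by
          rw [hs]; ring
        rw [hsx'] at hknap
        rw [← hlorx] at hknap
        linarith
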